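/- As n → ∞, Σ_{k=2}^{n−2} p_{LM}(n,k)·H_k = 7/3 + O(n^{-1} log n) and Σ_{k=1}^{n−3} p_{KLM}(n,k)·H_k = 4/3 + O(n^{-1} log n), where p_{LM}(n,k) = ((n+1)(n+2)/((n−1)(n−2)(n−3)))·(72(k−1)/((k+1)(k+2)(k+3)))·((n+3)/(k+4) − 1) and p_{KLM}(n,k) = ((n+3)/((n−1)(n−2)(n−3)))·(72/((k+1)(k+2)))·((n+1)(n+2)/((k+3)(k+4)) − 1) − ((n+2)/((n−1)(n−2)(n−3)))·(144/((k+1)(k+2)))·((n+1)/(k+3) − 1). -/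

import Mathlib

set_option linter.all false

open Finset

/-- `n`-th harmonic number. -/
noncomputable def H (n : ℕ) : ℝ := ∑ k ∈ Finset.Icc 1 n, (1 : ℝ) / k

/-- Second-order harmonic number. -/
noncomputable def Hbar (n : ℕ) : ℝ := ∑ k ∈ Finset.Icc 1 n, (1 : ℝ) / (k : ℝ) ^ 2

noncomputable def pK (n k : ℕ) : ℝ :=
  ((n : ℝ) + 1) / ((n : ℝ) - 1) * (2 / (((k : ℝ) + 1) * ((k : ℝ) + 2)))

noncomputable def pL (n k : ℕ) : ℝ :=
  ((n : ℝ) + 1) * ((n : ℝ) + 2) / (((n : ℝ) - 1) * ((n : ℝ) - 2)) *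
    (6 * ((k : ℝ) - 1) / (((k : ℝ) + 1) * ((k : ℝ) + 2) * ((k : ℝ) + 3)))

noncomputable def pM (n k : ℕ) : ℝ :=
  ((n : ℝ) + 1) * ((n : ℝ) + 2) * ((n : ℝ) + 3) /
      (((n : ℝ) - 1) * ((n : ℝ) - 2) * ((n : ℝ) - 3)) *
    (12 * ((k : ℝ) - 1) * ((k : ℝ) - 2) /
      (((k : ℝ) + 1) * ((k : ℝ) + 2) * ((k : ℝ) + 3) * ((k : ℝ) + 4)))

noncomputable def pKL (n k : ℕ) : ℝ :=
  ((n : ℝ) + 1) / (((n : ℝ) - 1) * ((n : ℝ) - 2)) *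
    (12 / (((k : ℝ) + 1) * ((k : ℝ) + 2))) * (((n : ℝ) + 2) / ((k : ℝ) + 3) - 1)

noncomputable def pLM (n k : ℕ) : ℝ :=
  ((n : ℝ) + 1) * ((n : ℝ) + 2) / (((n : ℝ) - 1) * ((n : ℝ) - 2) * ((n : ℝ) - 3)) *
    (72 * ((k : ℝ) - 1) / (((k : ℝ) + 1) * ((k : ℝ) + 2) * ((k : ℝ) + 3))) *
      (((n : ℝ) + 3) / ((k : ℝ) + 4) - 1)

noncomputable def pKLM (n k : ℕ) : ℝ :=
  ((n : ℝ) + 3) / (((n : ℝ) - 1) * ((n : ℝ) - 2) * ((n : ℝ) - 3)) *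
      (72 / (((k : ℝ) + 1) * ((k : ℝ) + 2))) *
      (((n : ℝ) + 1) * ((n : ℝ) + 2) / (((k : ℝ) + 3) * ((k : ℝ) + 4)) - 1) -
    ((n : ℝ) + 2) / (((n : ℝ) - 1) * ((n : ℝ) - 2) * ((n : ℝ) - 3)) *
      (144 / (((k : ℝ) + 1) * ((k : ℝ) + 2))) * (((n : ℝ) + 1) / ((k : ℝ) + 3) - 1)

lemma H_zero : H 0 = 0 := by simp [H]

lemma H_succ (n : ℕ) : H (n+1) = H n + 1/((n:ℝ)+1) := by
  rw [H, H, Finset.sum_Icc_succ_top (by omega)]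
  push_cast; ring

lemma T1_eq (m : ℕ) :
    ∑ k ∈ Icc 2 m, ((k:ℝ)-1) * H k / (((k:ℝ)+1)*((k:ℝ)+2)*((k:ℝ)+3))
      = -((m:ℝ)+1) * H m / (((m:ℝ)+2)*((m:ℝ)+3)) + (m:ℝ)/(2*((m:ℝ)+2)) := by
  induction m with
  | zero => simp [H_zero]
  | succ m ih =>
    rcases Nat.lt_or_ge m 1 with h | h
    · interval_cases m
      norm_num [show Icc 2 1 = (∅ : Finset ℕ) from rfl, H_succ, H_zero]
    · rw [Finset.sum_Icc_succ_top (by omega), ih, H_succ]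
      have h1 : (0:ℝ) < (m:ℝ)+1 := by positivity
      have h2 : (0:ℝ) < (m:ℝ)+2 := by positivity
      have h3 : (0:ℝ) < (m:ℝ)+3 := by positivity
      push_cast
      field_simp
      ring

lemma T2_eq (m : ℕ) :
    ∑ k ∈ Icc 2 m, ((k:ℝ)-1) * H k / (((k:ℝ)+1)*((k:ℝ)+2)*((k:ℝ)+3)*((k:ℝ)+4))
      = -(3*(m:ℝ)+2) * H m / (6*((m:ℝ)+2)*((m:ℝ)+3)*((m:ℝ)+4))
        + (m:ℝ)*(7*(m:ℝ)^2+42*(m:ℝ)+23)/(216*((m:ℝ)+1)*((m:ℝ)+2)*((m:ℝ)+3)) := by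
  induction m with
  | zero => simp [H_zero]
  | succ m ih =>
    rcases Nat.lt_or_ge m 1 with h | h
    · interval_cases m
      norm_num [show Icc 2 1 = (∅ : Finset ℕ) from rfl, H_succ, H_zero]
    · rw [Finset.sum_Icc_succ_top (by omega), ih, H_succ]
      have h1 : (0:ℝ) < (m:ℝ)+1 := by positivity
      have h2 : (0:ℝ) < (m:ℝ)+2 := by positivity
      have h3 : (0:ℝ) < (m:ℝ)+3 := by positivity
      have h4 : (0:ℝ) < (m:ℝ)+4 := by positivity
      have h5 : (0:ℝ) < (m:ℝ)+5 := by positivity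
      push_cast
      field_simp
      ring

lemma SLM_eq (n : ℕ) (hn : 4 ≤ n) :
    ∑ k ∈ Icc 2 (n-2), pLM n k * H k
      = (36*(n:ℝ)^5 + 84*(n:ℝ)^4 - 12*(n:ℝ)^3 - 84*(n:ℝ)^2 - 24*(n:ℝ)) * H (n-2)
          / (((n:ℝ)-1)^2*((n:ℝ)-2)*((n:ℝ)-3)*(n:ℝ)*((n:ℝ)+1)*((n:ℝ)+2))
        + (7/3*(n:ℝ)^7 - 52/3*(n:ℝ)^6 - 224/3*(n:ℝ)^5 + 98/3*(n:ℝ)^4 + 829/3*(n:ℝ)^3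
            + 458/3*(n:ℝ)^2 - 60*(n:ℝ) - 24)
          / (((n:ℝ)-1)^2*((n:ℝ)-2)*((n:ℝ)-3)*(n:ℝ)*((n:ℝ)+1)*((n:ℝ)+2)) := by
  have hx1 : (0:ℝ) < (n:ℝ)-1 := by
    have : (4:ℝ) ≤ (n:ℝ) := by exact_mod_cast hn
    linarith
  have hx2 : (0:ℝ) < (n:ℝ)-2 := by
    have : (4:ℝ) ≤ (n:ℝ) := by exact_mod_cast hn
    linarith
  have hx3 : (0:ℝ) < (n:ℝ)-3 := by
    have : (4:ℝ) ≤ (n:ℝ) := by exact_mod_cast hn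
    linarith
  have hx0 : (0:ℝ) < (n:ℝ) := by positivity
  have hcast : ((n-2:ℕ):ℝ) = (n:ℝ) - 2 := by
    have : 2 ≤ n := by omega
    push_cast [this]; ring
  have hsplit : ∀ k ∈ Icc 2 (n-2), pLM n k * H k =
      (72*((n:ℝ)+1)*((n:ℝ)+2)*((n:ℝ)+3)/(((n:ℝ)-1)*((n:ℝ)-2)*((n:ℝ)-3))) *
        (((k:ℝ)-1) * H k / (((k:ℝ)+1)*((k:ℝ)+2)*((k:ℝ)+3)*((k:ℝ)+4)))
      - (72*((n:ℝ)+1)*((n:ℝ)+2)/(((n:ℝ)-1)*((n:ℝ)-2)*((n:ℝ)-3))) *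
        (((k:ℝ)-1) * H k / (((k:ℝ)+1)*((k:ℝ)+2)*((k:ℝ)+3))) := by
    intro k _
    have k1 : (0:ℝ) < (k:ℝ)+1 := by positivity
    have k2 : (0:ℝ) < (k:ℝ)+2 := by positivity
    have k3 : (0:ℝ) < (k:ℝ)+3 := by positivity
    have k4 : (0:ℝ) < (k:ℝ)+4 := by positivity
    rw [pLM]
    field_simp
  rw [Finset.sum_congr rfl hsplit, Finset.sum_sub_distrib, ← Finset.mul_sum, ← Finset.mul_sum,
    T1_eq, T2_eq, hcast]
  field_simp
  ring

lemma U1_eq (m : ℕ) :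
    ∑ k ∈ Icc 1 m, H k / (((k:ℝ)+1)*((k:ℝ)+2))
      = -H m/((m:ℝ)+2) + (m:ℝ)/((m:ℝ)+1) := by
  induction m with
  | zero => simp [H_zero]
  | succ m ih =>
    rw [Finset.sum_Icc_succ_top (by omega), ih, H_succ]
    have h1 : (0:ℝ) < (m:ℝ)+1 := by positivity
    have h2 : (0:ℝ) < (m:ℝ)+2 := by positivity
    have h3 : (0:ℝ) < (m:ℝ)+3 := by positivity
    push_cast
    field_simp
    ring

lemma U2_eq (m : ℕ) :
    ∑ k ∈ Icc 1 m, H k / (((k:ℝ)+1)*((k:ℝ)+2)*((k:ℝ)+3))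
      = -H m/(2*((m:ℝ)+2)*((m:ℝ)+3)) + (m:ℝ)*((m:ℝ)+3)/(8*((m:ℝ)+1)*((m:ℝ)+2)) := by
  induction m with
  | zero => simp [H_zero]
  | succ m ih =>
    rw [Finset.sum_Icc_succ_top (by omega), ih, H_succ]
    have h1 : (0:ℝ) < (m:ℝ)+1 := by positivity
    have h2 : (0:ℝ) < (m:ℝ)+2 := by positivity
    have h3 : (0:ℝ) < (m:ℝ)+3 := by positivity
    have h4 : (0:ℝ) < (m:ℝ)+4 := by positivity
    push_cast
    field_simp
    ring

lemma U3_eq (m : ℕ) :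
    ∑ k ∈ Icc 1 m, H k / (((k:ℝ)+1)*((k:ℝ)+2)*((k:ℝ)+3)*((k:ℝ)+4))
      = -H m/(3*((m:ℝ)+2)*((m:ℝ)+3)*((m:ℝ)+4))
        + (m:ℝ)*((m:ℝ)^2+6*(m:ℝ)+11)/(54*((m:ℝ)+1)*((m:ℝ)+2)*((m:ℝ)+3)) := by
  induction m with
  | zero => simp [H_zero]
  | succ m ih =>
    rw [Finset.sum_Icc_succ_top (by omega), ih, H_succ]
    have h1 : (0:ℝ) < (m:ℝ)+1 := by positivity
    have h2 : (0:ℝ) < (m:ℝ)+2 := by positivity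
    have h3 : (0:ℝ) < (m:ℝ)+3 := by positivity
    have h4 : (0:ℝ) < (m:ℝ)+4 := by positivity
    have h5 : (0:ℝ) < (m:ℝ)+5 := by positivity
    push_cast
    field_simp
    ring

lemma SKLM_eq (n : ℕ) (hn : 4 ≤ n) :
    ∑ k ∈ Icc 1 (n-3), pKLM n k * H k
      = ((-24*(n:ℝ)^4 + 48*(n:ℝ)^3 + 24*(n:ℝ)^2 - 48*(n:ℝ)) * H (n-3)
          + (4/3*(n:ℝ)^7 - 38/3*(n:ℝ)^6 + 154/3*(n:ℝ)^5 - 158/3*(n:ℝ)^4 - 374/3*(n:ℝ)^3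
              + 412/3*(n:ℝ)^2 + 96*(n:ℝ) - 48))
        / (((n:ℝ)-1)^2*((n:ℝ)-2)^2*((n:ℝ)-3)*(n:ℝ)*((n:ℝ)+1)) := by
  have hn' : (4:ℝ) ≤ (n:ℝ) := by exact_mod_cast hn
  have hx1 : (0:ℝ) < (n:ℝ)-1 := by linarith
  have hx2 : (0:ℝ) < (n:ℝ)-2 := by linarith
  have hx3 : (0:ℝ) < (n:ℝ)-3 := by linarith
  have hx0 : (0:ℝ) < (n:ℝ) := by positivity
  have hcast : ((n-3:ℕ):ℝ) = (n:ℝ) - 3 := by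
    have : 3 ≤ n := by omega
    push_cast [this]; ring
  have hsplit : ∀ k ∈ Icc 1 (n-3), pKLM n k * H k =
      (72*((n:ℝ)+3)*((n:ℝ)+1)*((n:ℝ)+2)/(((n:ℝ)-1)*((n:ℝ)-2)*((n:ℝ)-3))) *
        (H k / (((k:ℝ)+1)*((k:ℝ)+2)*((k:ℝ)+3)*((k:ℝ)+4)))
      - (144*((n:ℝ)+1)*((n:ℝ)+2)/(((n:ℝ)-1)*((n:ℝ)-2)*((n:ℝ)-3))) *
        (H k / (((k:ℝ)+1)*((k:ℝ)+2)*((k:ℝ)+3)))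
      + (72*((n:ℝ)+1)/(((n:ℝ)-1)*((n:ℝ)-2)*((n:ℝ)-3))) *
        (H k / (((k:ℝ)+1)*((k:ℝ)+2))) := by
    intro k _
    have k1 : (0:ℝ) < (k:ℝ)+1 := by positivity
    have k2 : (0:ℝ) < (k:ℝ)+2 := by positivity
    have k3 : (0:ℝ) < (k:ℝ)+3 := by positivity
    have k4 : (0:ℝ) < (k:ℝ)+4 := by positivity
    rw [pKLM]
    field_simp
    ring
  rw [Finset.sum_congr rfl hsplit]
  rw [Finset.sum_add_distrib, Finset.sum_sub_distrib, ← Finset.mul_sum, ← Finset.mul_sum,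
    ← Finset.mul_sum, U1_eq, U2_eq, U3_eq, hcast]
  field_simp
  ring

lemma H_eq_harmonic (n : ℕ) : H n = (harmonic n : ℝ) := by
  rw [H, harmonic_eq_sum_Icc]
  push_cast
  exact Finset.sum_congr rfl fun k _ => one_div _

lemma H_nonneg (n : ℕ) : 0 ≤ H n := by
  apply Finset.sum_nonneg
  intro k _
  positivity

lemma H_mono {m n : ℕ} (h : m ≤ n) : H m ≤ H n := by
  apply Finset.sum_le_sum_of_subset_of_nonneg (Finset.Icc_subset_Icc_right h)
  intro k _ _
  positivity

lemma H_le_log (n : ℕ) : H n ≤ 1 + Real.log n := by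
  rw [H_eq_harmonic]
  exact_mod_cast harmonic_le_one_add_log n

lemma log_ge_two {x : ℝ} (hx : 8 ≤ x) : 2 ≤ Real.log x := by
  have h8 : Real.log 8 ≤ Real.log x := Real.log_le_log (by norm_num) hx
  have : Real.log 8 = 3 * Real.log 2 := by
    rw [show (8:ℝ) = 2^3 by norm_num, Real.log_pow]
    push_cast; ring
  have h2 := Real.log_two_gt_d9
  linarith

set_option maxHeartbeats 2000000 in
lemma LM_bound (n : ℕ) (hn : 8 ≤ n) :
    |∑ k ∈ Icc 2 (n-2), pLM n k * H k - 7/3| ≤ 2000 * Real.log n / n := by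
  have hx : (8:ℝ) ≤ (n:ℝ) := by exact_mod_cast hn
  set x : ℝ := (n:ℝ) with hxdef
  have hx0 : (0:ℝ) < x := by linarith
  have hD : (0:ℝ) < (x-1)^2*(x-2)*(x-3)*x*(x+1)*(x+2) := by
    have : (0:ℝ) < x - 3 := by linarith
    have h1 : (0:ℝ) < x - 1 := by linarith
    have h2 : (0:ℝ) < x - 2 := by linarith
    positivity
  set h : ℝ := H (n-2) with hhdef
  have hh0 : 0 ≤ h := H_nonneg _
  have hL : 2 ≤ Real.log x := log_ge_two hx
  have hL0 : 0 ≤ Real.log x := by linarith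
  have hh1 : h ≤ 1 + Real.log x := by
    calc h ≤ H n := H_mono (by omega)
    _ ≤ 1 + Real.log x := H_le_log n
  have hy : (0:ℝ) ≤ x - 8 := by linarith
  have hP : (0:ℝ) ≤ 36*x^5 + 84*x^4 - 12*x^3 - 84*x^2 - 24*x := by
    linarith [pow_nonneg hy 2, pow_nonneg hy 3, pow_nonneg hy 4, pow_nonneg hy 5, hy]
  rw [SLM_eq n (by omega)]
  have hEq : (36*x^5 + 84*x^4 - 12*x^3 - 84*x^2 - 24*x) * h
          / ((x-1)^2*(x-2)*(x-3)*x*(x+1)*(x+2))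
        + (7/3*x^7 - 52/3*x^6 - 224/3*x^5 + 98/3*x^4 + 829/3*x^3 + 458/3*x^2 - 60*x - 24)
          / ((x-1)^2*(x-2)*(x-3)*x*(x+1)*(x+2)) - 7/3
      = ((36*x^5 + 84*x^4 - 12*x^3 - 84*x^2 - 24*x) * h
          + (-8*x^6 - 70*x^5 - 14*x^4 + 302*x^3 + 190*x^2 - 88*x - 24))
          / ((x-1)^2*(x-2)*(x-3)*x*(x+1)*(x+2)) := by
    have n1 : x - 1 ≠ 0 := (by linarith : (0:ℝ) < x - 1).ne'
    have n2 : x - 2 ≠ 0 := (by linarith : (0:ℝ) < x - 2).ne'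
    have n3 : x - 3 ≠ 0 := (by linarith : (0:ℝ) < x - 3).ne'
    field_simp
    ring
  rw [hEq, abs_div, abs_of_pos hD, div_le_div_iff₀ hD hx0]
  have hQ : |(-8*x^6 - 70*x^5 - 14*x^4 + 302*x^3 + 190*x^2 - 88*x - 24 : ℝ)| ≤ 100*x^6 := by
    rw [abs_le]
    constructor
    · linarith [pow_nonneg hy 2, pow_nonneg hy 3, pow_nonneg hy 4, pow_nonneg hy 5,
        pow_nonneg hy 6, hy]
    · linarith [pow_nonneg hy 2, pow_nonneg hy 3, pow_nonneg hy 4, pow_nonneg hy 5,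
        pow_nonneg hy 6, hy]
  have hN : |(36*x^5 + 84*x^4 - 12*x^3 - 84*x^2 - 24*x) * h
      + (-8*x^6 - 70*x^5 - 14*x^4 + 302*x^3 + 190*x^2 - 88*x - 24)|
      ≤ (36*x^5 + 84*x^4 - 12*x^3 - 84*x^2 - 24*x) * h + 100*x^6 := by
    calc |(36*x^5 + 84*x^4 - 12*x^3 - 84*x^2 - 24*x) * h
        + (-8*x^6 - 70*x^5 - 14*x^4 + 302*x^3 + 190*x^2 - 88*x - 24)|
        ≤ |(36*x^5 + 84*x^4 - 12*x^3 - 84*x^2 - 24*x) * h|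
          + |(-8*x^6 - 70*x^5 - 14*x^4 + 302*x^3 + 190*x^2 - 88*x - 24 : ℝ)| := abs_add_le _ _
      _ ≤ (36*x^5 + 84*x^4 - 12*x^3 - 84*x^2 - 24*x) * h + 100*x^6 := by
          rw [abs_of_nonneg (mul_nonneg hP hh0)]
          linarith
  calc |(36*x^5 + 84*x^4 - 12*x^3 - 84*x^2 - 24*x) * h
      + (-8*x^6 - 70*x^5 - 14*x^4 + 302*x^3 + 190*x^2 - 88*x - 24)| * x
      ≤ ((36*x^5 + 84*x^4 - 12*x^3 - 84*x^2 - 24*x) * h + 100*x^6) * x :=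
        mul_le_mul_of_nonneg_right hN (le_of_lt hx0)
    _ ≤ ((36*x^5 + 84*x^4 - 12*x^3 - 84*x^2 - 24*x) * (3/2 * Real.log x)
          + 50 * Real.log x * x^6) * x := by
        have e1 : h ≤ 3/2 * Real.log x := by linarith
        have e2 : (36*x^5 + 84*x^4 - 12*x^3 - 84*x^2 - 24*x) * h
            ≤ (36*x^5 + 84*x^4 - 12*x^3 - 84*x^2 - 24*x) * (3/2 * Real.log x) :=
          mul_le_mul_of_nonneg_left e1 hP
        have e3 : 100*x^6 ≤ 50 * Real.log x * x^6 := by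
          nlinarith [pow_nonneg (le_of_lt hx0) 6]
        have := mul_le_mul_of_nonneg_right (add_le_add e2 e3) (le_of_lt hx0)
        linarith
    _ = Real.log x * (((3/2) * (36*x^5 + 84*x^4 - 12*x^3 - 84*x^2 - 24*x) + 50*x^6) * x) := by
        ring
    _ ≤ Real.log x * (2000 * ((x-1)^2*(x-2)*(x-3)*x*(x+1)*(x+2))) := by
        apply mul_le_mul_of_nonneg_left _ hL0
        linarith [mul_nonneg (pow_nonneg hy 5) (pow_nonneg hy 2), pow_nonneg hy 2,
          pow_nonneg hy 3, pow_nonneg hy 4, pow_nonneg hy 5, pow_nonneg hy 6,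
          pow_nonneg hy 7, hy]
    _ = 2000 * Real.log x * ((x-1)^2*(x-2)*(x-3)*x*(x+1)*(x+2)) := by ring

set_option maxHeartbeats 2000000 in
lemma KLM_bound (n : ℕ) (hn : 8 ≤ n) :
    |∑ k ∈ Icc 1 (n-3), pKLM n k * H k - 4/3| ≤ 2000 * Real.log n / n := by
  have hx : (8:ℝ) ≤ (n:ℝ) := by exact_mod_cast hn
  set x : ℝ := (n:ℝ) with hxdef
  have hx0 : (0:ℝ) < x := by linarith
  have hD : (0:ℝ) < (x-1)^2*(x-2)^2*(x-3)*x*(x+1) := by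
    have h3 : (0:ℝ) < x - 3 := by linarith
    have h1 : (0:ℝ) < x - 1 := by linarith
    have h2 : (0:ℝ) < x - 2 := by linarith
    positivity
  set h : ℝ := H (n-3) with hhdef
  have hh0 : 0 ≤ h := H_nonneg _
  have hL : 2 ≤ Real.log x := log_ge_two hx
  have hL0 : 0 ≤ Real.log x := by linarith
  have hh1 : h ≤ 1 + Real.log x := by
    calc h ≤ H n := H_mono (by omega)
    _ ≤ 1 + Real.log x := H_le_log n
  have hy : (0:ℝ) ≤ x - 8 := by linarith
  have hPa : (0:ℝ) ≤ 24*x^4 - 48*x^3 - 24*x^2 + 48*x := by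
    linarith [pow_nonneg hy 2, pow_nonneg hy 3, pow_nonneg hy 4, hy]
  rw [SKLM_eq n (by omega)]
  have hEq : ((-24*x^4 + 48*x^3 + 24*x^2 - 48*x) * h
          + (4/3*x^7 - 38/3*x^6 + 154/3*x^5 - 158/3*x^4 - 374/3*x^3
              + 412/3*x^2 + 96*x - 48))
          / ((x-1)^2*(x-2)^2*(x-3)*x*(x+1)) - 4/3
      = ((-24*x^4 + 48*x^3 + 24*x^2 - 48*x) * h
          + (-2*x^6 + 22*x^5 - 26*x^4 - 110*x^3 + 100*x^2 + 112*x - 48))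
          / ((x-1)^2*(x-2)^2*(x-3)*x*(x+1)) := by
    have n1 : x - 1 ≠ 0 := (by linarith : (0:ℝ) < x - 1).ne'
    have n2 : x - 2 ≠ 0 := (by linarith : (0:ℝ) < x - 2).ne'
    have n3 : x - 3 ≠ 0 := (by linarith : (0:ℝ) < x - 3).ne'
    field_simp
    ring
  rw [hEq, abs_div, abs_of_pos hD, div_le_div_iff₀ hD hx0]
  have hQ : |(-2*x^6 + 22*x^5 - 26*x^4 - 110*x^3 + 100*x^2 + 112*x - 48 : ℝ)| ≤ 100*x^6 := by
    rw [abs_le]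
    constructor
    · linarith [pow_nonneg hy 2, pow_nonneg hy 3, pow_nonneg hy 4, pow_nonneg hy 5,
        pow_nonneg hy 6, hy]
    · linarith [pow_nonneg hy 2, pow_nonneg hy 3, pow_nonneg hy 4, pow_nonneg hy 5,
        pow_nonneg hy 6, hy]
  have hN : |(-24*x^4 + 48*x^3 + 24*x^2 - 48*x) * h
      + (-2*x^6 + 22*x^5 - 26*x^4 - 110*x^3 + 100*x^2 + 112*x - 48)|
      ≤ (24*x^4 - 48*x^3 - 24*x^2 + 48*x) * h + 100*x^6 := by
    calc |(-24*x^4 + 48*x^3 + 24*x^2 - 48*x) * h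
        + (-2*x^6 + 22*x^5 - 26*x^4 - 110*x^3 + 100*x^2 + 112*x - 48)|
        ≤ |(-24*x^4 + 48*x^3 + 24*x^2 - 48*x) * h|
          + |(-2*x^6 + 22*x^5 - 26*x^4 - 110*x^3 + 100*x^2 + 112*x - 48 : ℝ)| := abs_add_le _ _
      _ ≤ (24*x^4 - 48*x^3 - 24*x^2 + 48*x) * h + 100*x^6 := by
          have : |(-24*x^4 + 48*x^3 + 24*x^2 - 48*x) * h|
              = (24*x^4 - 48*x^3 - 24*x^2 + 48*x) * h := by
            rw [show (-24*x^4 + 48*x^3 + 24*x^2 - 48*x) * h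
                = -((24*x^4 - 48*x^3 - 24*x^2 + 48*x) * h) by ring, abs_neg,
              abs_of_nonneg (mul_nonneg hPa hh0)]
          linarith
  calc |(-24*x^4 + 48*x^3 + 24*x^2 - 48*x) * h
      + (-2*x^6 + 22*x^5 - 26*x^4 - 110*x^3 + 100*x^2 + 112*x - 48)| * x
      ≤ ((24*x^4 - 48*x^3 - 24*x^2 + 48*x) * h + 100*x^6) * x :=
        mul_le_mul_of_nonneg_right hN (le_of_lt hx0)
    _ ≤ ((24*x^4 - 48*x^3 - 24*x^2 + 48*x) * (3/2 * Real.log x)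
          + 50 * Real.log x * x^6) * x := by
        have e1 : h ≤ 3/2 * Real.log x := by linarith
        have e2 : (24*x^4 - 48*x^3 - 24*x^2 + 48*x) * h
            ≤ (24*x^4 - 48*x^3 - 24*x^2 + 48*x) * (3/2 * Real.log x) :=
          mul_le_mul_of_nonneg_left e1 hPa
        have e3 : 100*x^6 ≤ 50 * Real.log x * x^6 := by
          nlinarith [pow_nonneg (le_of_lt hx0) 6]
        have := mul_le_mul_of_nonneg_right (add_le_add e2 e3) (le_of_lt hx0)
        linarith
    _ = Real.log x * (((3/2) * (24*x^4 - 48*x^3 - 24*x^2 + 48*x) + 50*x^6) * x) := by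
        ring
    _ ≤ Real.log x * (2000 * ((x-1)^2*(x-2)^2*(x-3)*x*(x+1))) := by
        apply mul_le_mul_of_nonneg_left _ hL0
        linarith [mul_nonneg (pow_nonneg hy 5) (pow_nonneg hy 2), pow_nonneg hy 2,
          pow_nonneg hy 3, pow_nonneg hy 4, pow_nonneg hy 5, pow_nonneg hy 6,
          pow_nonneg hy 7, hy]
    _ = 2000 * Real.log x * ((x-1)^2*(x-2)^2*(x-3)*x*(x+1)) := by ring

theorem expectation_H_LM_and_H_KLM :
    (∃ C : ℝ, 0 < C ∧ ∃ N : ℕ, ∀ n : ℕ, N ≤ n →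
      |∑ k ∈ Finset.Icc 2 (n - 2), pLM n k * H k - 7 / 3| ≤ C * Real.log n / n) ∧
    (∃ C : ℝ, 0 < C ∧ ∃ N : ℕ, ∀ n : ℕ, N ≤ n →
      |∑ k ∈ Finset.Icc 1 (n - 3), pKLM n k * H k - 4 / 3| ≤ C * Real.log n / n) := by
  exact ⟨⟨2000, by norm_num, 8, fun n hn => LM_bound n hn⟩,
    ⟨2000, by norm_num, 8, fun n hn => KLM_bound n hn⟩⟩
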